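/- Let θ₁,…,θ_n ∈ ℝ, let L(Θ) be the line in ℝ^{n+1} spanned by (1, θ₁,…,θ_n), and for u ∈ ℝ^{n+1} let r(u) be the Euclidean distance from u to L(Θ) and h(u) the distance from u to the orthogonal complement L(Θ)^⊥. Let t, α, β > 0 satisfy t^{β-α} ≥ 2, and suppose v ∈ ℤ^{n+1} satisfies r(v) = t^{α-1-β} and h(v) = t^α. Then the cylinder C = {u ∈ ℝ^{n+1} : r(u) < t, t^{-β} ≤ h(u) ≤ t^{-α} - t^{-β}} contains no integer points. -/

import Mathlib

open Metric in
lemma infDist_submodule' {E : Type*} [NormedAddCommGroup E] [InnerProductSpace ℝ E]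
    (K : Submodule ℝ E) [K.HasOrthogonalProjection] (x : E) :
    Metric.infDist x (K : Set E) = ‖x - K.orthogonalProjectionOnto x‖ := by
  rw [Metric.infDist_eq_iInf, ← Submodule.starProjection_apply, Submodule.starProjection_minimal]
  congr 1
  ext y
  rw [dist_eq_norm]

lemma abs_inner_span_singleton {E : Type*} [NormedAddCommGroup E] [InnerProductSpace ℝ E]
    (e : E) {a b : E} (ha : a ∈ Submodule.span ℝ {e}) (hb : b ∈ Submodule.span ℝ {e}) :
    |(inner ℝ a b : ℝ)| = ‖a‖ * ‖b‖ := by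
  obtain ⟨c, rfl⟩ := Submodule.mem_span_singleton.1 ha
  obtain ⟨d, rfl⟩ := Submodule.mem_span_singleton.1 hb
  rw [real_inner_smul_left, real_inner_smul_right, real_inner_self_eq_norm_mul_norm,
    norm_smul, norm_smul]
  simp [abs_mul, Real.norm_eq_abs]
  ring

/-- Empty cylinder lemma: let L(Θ) be the line spanned by (1, θ₁, …, θ_n) in
ℝ^{n+1}, r(u) the distance from u to L(Θ) and h(u) the distance from u to
L(Θ)^⊥.  If t^{β-α} ≥ 2 and v ∈ ℤ^{n+1} satisfies r(v) = t^{α-1-β}, h(v) = t^α,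
then the cylinder {u : r(u) < t, t^{-β} ≤ h(u) ≤ t^{-α} - t^{-β}} contains no
integer points. -/
theorem empty_cylinder (n : ℕ) (θ : Fin n → ℝ)
    (e : EuclideanSpace ℝ (Fin (n + 1))) (he : ∀ i, e i = (Fin.cons (1 : ℝ) θ : Fin (n + 1) → ℝ) i)
    (r h : EuclideanSpace ℝ (Fin (n + 1)) → ℝ)
    (hr : ∀ u, r u = Metric.infDist u
      ((Submodule.span ℝ {e} : Submodule ℝ (EuclideanSpace ℝ (Fin (n + 1)))) : Set (EuclideanSpace ℝ (Fin (n + 1)))))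
    (hh : ∀ u, h u = Metric.infDist u
      (((Submodule.span ℝ {e})ᗮ : Submodule ℝ (EuclideanSpace ℝ (Fin (n + 1)))) : Set (EuclideanSpace ℝ (Fin (n + 1)))))
    (t α β : ℝ) (ht : 0 < t) (hα : 0 < α) (hβ : 0 < β)
    (htαβ : 2 ≤ t ^ (β - α))
    (v : Fin (n + 1) → ℤ)
    (hrv : r (WithLp.toLp 2 (fun i => (v i : ℝ))) = t ^ (α - 1 - β))
    (hhv : h (WithLp.toLp 2 (fun i => (v i : ℝ))) = t ^ α) :
    ∀ u : Fin (n + 1) → ℤ,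
      ¬ (r (WithLp.toLp 2 (fun i => (u i : ℝ))) < t ∧
         t ^ (-β) ≤ h (WithLp.toLp 2 (fun i => (u i : ℝ))) ∧
         h (WithLp.toLp 2 (fun i => (u i : ℝ))) ≤ t ^ (-α) - t ^ (-β)) := by
  rintro u ⟨h1, h2, h3⟩
  classical
  set K : Submodule ℝ (EuclideanSpace ℝ (Fin (n+1))) := Submodule.span ℝ {e} with hK
  haveI : K.HasOrthogonalProjection := inferInstance
  haveI : Kᗮ.HasOrthogonalProjection := inferInstance
  set U : EuclideanSpace ℝ (Fin (n+1)) := (WithLp.toLp 2 (fun i => ((u i : ℝ)))) with hUdef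
  set V : EuclideanSpace ℝ (Fin (n+1)) := (WithLp.toLp 2 (fun i => ((v i : ℝ)))) with hVdef
  set aU : EuclideanSpace ℝ (Fin (n+1)) :=
    (K.orthogonalProjectionOnto U : EuclideanSpace ℝ (Fin (n+1))) with haU
  set aV : EuclideanSpace ℝ (Fin (n+1)) :=
    (K.orthogonalProjectionOnto V : EuclideanSpace ℝ (Fin (n+1))) with haV
  -- rewrite the distance functions
  have hrU : r (WithLp.toLp 2 (fun i => ((u i : ℝ)))) = ‖U - aU‖ := by
    rw [hr]; exact infDist_submodule' K U
  have hrV : r (WithLp.toLp 2 (fun i => ((v i : ℝ)))) = ‖V - aV‖ := by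
    rw [hr]; exact infDist_submodule' K V
  have hhU : h (WithLp.toLp 2 (fun i => ((u i : ℝ)))) = ‖aU‖ := by
    rw [hh]
    have := infDist_submodule' Kᗮ U
    rw [← Submodule.starProjection_apply, Submodule.starProjection_orthogonal_val, Submodule.starProjection_apply] at this
    simpa [haU] using this
  have hhV : h (WithLp.toLp 2 (fun i => ((v i : ℝ)))) = ‖aV‖ := by
    rw [hh]
    have := infDist_submodule' Kᗮ V
    rw [← Submodule.starProjection_apply, Submodule.starProjection_orthogonal_val, Submodule.starProjection_apply] at this
    simpa [haV] using this
  rw [hrU] at h1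
  rw [hhU] at h2 h3
  rw [hrV] at hrv
  rw [hhV] at hhv
  -- inner product decomposition
  set A : ℝ := inner ℝ aU aV with hA
  set B : ℝ := inner ℝ (U - aU) (V - aV) with hB
  have hsplit : (inner ℝ U V : ℝ) = A + B := by
    have h1' : U - aU ∈ Kᗮ := K.sub_starProjection_mem_orthogonal U
    have h2' : V - aV ∈ Kᗮ := K.sub_starProjection_mem_orthogonal V
    have c1 : (inner ℝ aU (V - aV) : ℝ) = 0 :=
      Submodule.inner_right_of_mem_orthogonal (K.orthogonalProjectionOnto U).2 h2'
    have c2 : (inner ℝ (U - aU) aV : ℝ) = 0 :=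
      Submodule.inner_left_of_mem_orthogonal (K.orthogonalProjectionOnto V).2 h1'
    have eU : U = aU + (U - aU) := by abel
    have eV : V = aV + (V - aV) := by abel
    nth_rewrite 1 [eU]
    nth_rewrite 1 [eV]
    rw [inner_add_left, inner_add_right, inner_add_right, c1, c2, hA, hB]
    ring
  have habs : |A| = ‖aU‖ * ‖aV‖ :=
    abs_inner_span_singleton e (K.orthogonalProjectionOnto U).2 (K.orthogonalProjectionOnto V).2
  have hCS : |B| ≤ ‖U - aU‖ * ‖V - aV‖ := abs_real_inner_le_norm _ _
  -- numeric bounds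
  have p0 : (0:ℝ) < t ^ (α - 1 - β) := Real.rpow_pos_of_pos ht _
  have pα : (0:ℝ) < t ^ α := Real.rpow_pos_of_pos ht _
  have pαβ : (0:ℝ) < t ^ (α - β) := Real.rpow_pos_of_pos ht _
  have e1 : t ^ (-β) * t ^ α = t ^ (α - β) := by
    rw [← Real.rpow_add ht]; congr 1; ring
  have e2 : t * t ^ (α - 1 - β) = t ^ (α - β) := by
    nth_rewrite 1 [← Real.rpow_one t]
    rw [← Real.rpow_add ht]; congr 1; ring
  have e3 : t ^ (-α) * t ^ α = 1 := by
    rw [← Real.rpow_add ht]; simp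
  have bnd1 : ‖U - aU‖ * ‖V - aV‖ < t ^ (α - β) := by
    rw [hrv, ← e2]
    exact mul_lt_mul_of_pos_right h1 p0
  have bnd2 : t ^ (α - β) ≤ ‖aU‖ * ‖aV‖ := by
    rw [hhv, ← e1]
    exact mul_le_mul_of_nonneg_right h2 pα.le
  have bnd3 : ‖aU‖ * ‖aV‖ ≤ 1 - t ^ (α - β) := by
    rw [hhv]
    calc ‖aU‖ * t ^ α ≤ (t ^ (-α) - t ^ (-β)) * t ^ α :=
          mul_le_mul_of_nonneg_right h3 pα.le
      _ = 1 - t ^ (α - β) := by rw [sub_mul, e3, e1]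
  -- |A| bounds via abs triangle inequalities
  have key1 : |A| ≤ |A + B| + |B| := by
    have hab := abs_add_le (A + B) (-B)
    simpa using hab
  have key2 : |A + B| ≤ |A| + |B| := abs_add_le _ _
  have hlow : 0 < |A + B| := by
    have := hCS.trans_lt bnd1
    linarith [habs ▸ bnd2, key1]
  have hup : |A + B| < 1 := by
    have := hCS.trans_lt bnd1
    linarith [habs ▸ bnd3, key2]
  -- integrality of the inner product
  set m : ℤ := ∑ i, u i * v i with hm
  have hint : (inner ℝ U V : ℝ) = (m : ℝ) := by
    rw [PiLp.inner_apply, hm]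
    push_cast
    congr 1
    funext i
    simp [hUdef, hVdef, mul_comm]
  rw [hsplit] at hint
  rcases eq_or_ne m 0 with h0 | h0
  · rw [h0] at hint
    simp at hint
    rw [hint] at hlow
    simp at hlow
  · have : (1:ℝ) ≤ |(m : ℝ)| := by
      rw [← Int.cast_abs]
      exact_mod_cast Int.one_le_abs h0
    rw [← hint] at this
    linarith
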